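/- arXiv:1910.00037 — 2 statements merged into one kernel-verified Lean document; each statement's English description precedes it below -/
import Mathlib

section
/- Let W be a quasi-homogeneous polynomial in C[x_1,...,x_N] with rational weights q_1,...,q_N, i.e., W = ∑_{j=1}^N q_j x_j ∂W/∂x_j. Then in the cohomology of the twisted de Rham complex (Ω*_{C^N}[[u]], dW + u d_{DR}), the class of dx_1∧⋯∧dx_N is an eigenvector of the connection ∇_{u d/du} := u d/du − N/2 − W/u with eigenvalue −c_W/2, where c_W = ∑_{j=1}^N (1 − 2q_j). -/
open MvPolynomial PowerSeries

/-- The top-degree boundaries of the twisted de Rham complex `(Ω*_{ℂ^N}[[u]], dW + u d_DR)`,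
written in the trivialization `Ω^N[[u]] ≅ ℂ[x][[u]]` by the frame `dx_1 ∧ ⋯ ∧ dx_N`:
the `ℂ`-span of the elements `∂_j W · f + u · ∂_j f` for `j = 1,…,N` and
`f ∈ ℂ[x][[u]]` (here `u = PowerSeries.X` and `∂_j` acts coefficientwise). -/
noncomputable def twistedBoundaries (N : ℕ) (W : MvPolynomial (Fin N) ℂ) :
    Submodule ℂ (PowerSeries (MvPolynomial (Fin N) ℂ)) :=
  Submodule.span ℂ
    {b | ∃ (j : Fin N) (f : PowerSeries (MvPolynomial (Fin N) ℂ)),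
      b = PowerSeries.C (MvPolynomial.pderiv j W) * f +
        PowerSeries.X * PowerSeries.mk fun n => MvPolynomial.pderiv j (PowerSeries.coeff n f)}

/-- For a quasi-homogeneous polynomial `W = ∑_j q_j x_j ∂_j W`, the class of
`dx_1 ∧ ⋯ ∧ dx_N` in the twisted de Rham cohomology is an eigenvector of
`∇_{u d/du} = u d/du − N/2 − W/u` with eigenvalue `−c_W/2`, `c_W = ∑_j (1 − 2 q_j)`.
Multiplying the eigenvector equation by `u`, this says exactly that
`W + (N/2 − c_W/2)·u` (equivalently `W + (∑_j q_j)·u`) is a boundary. -/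
theorem quasihomogeneous_top_form_eigenvector (N : ℕ) (W : MvPolynomial (Fin N) ℂ)
    (q : Fin N → ℂ) (cW : ℂ)
    (hW : W = ∑ j, q j • (MvPolynomial.X j * MvPolynomial.pderiv j W))
    (hcW : cW = ∑ j, (1 - 2 * q j)) :
    PowerSeries.C W + ((N : ℂ) / 2 - cW / 2) •
        (PowerSeries.X : PowerSeries (MvPolynomial (Fin N) ℂ))
      ∈ twistedBoundaries N W := by
  have hs : ((N : ℂ) / 2 - cW / 2) = ∑ j, q j := by
    subst hcW
    rw [Finset.sum_sub_distrib, ← Finset.mul_sum, Finset.sum_const, Finset.card_univ,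
      Fintype.card_fin, nsmul_eq_mul, mul_one]
    ring
  have key : ∀ j : Fin N,
      (PowerSeries.C (q j • (MvPolynomial.X j * MvPolynomial.pderiv j W))
        + (q j) • (PowerSeries.X : PowerSeries (MvPolynomial (Fin N) ℂ)))
        ∈ twistedBoundaries N W := by
    intro j
    apply Submodule.subset_span
    refine ⟨j, PowerSeries.C (q j • MvPolynomial.X j), ?_⟩
    congr 1
    · rw [← map_mul]
      congr 1
      rw [mul_smul_comm, mul_comm ((MvPolynomial.pderiv j) W)]
    · have hmk : (PowerSeries.mk fun n => MvPolynomial.pderiv j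
          (PowerSeries.coeff n (PowerSeries.C (q j • MvPolynomial.X j))))
          = PowerSeries.C (MvPolynomial.C (q j)) := by
        ext n
        rcases n with _ | n
        · simp [MvPolynomial.smul_eq_C_mul]
        · simp
      rw [hmk]
      ext n
      rcases n with _ | n
      · simp
      · rw [PowerSeries.coeff_succ_X_mul]
        rcases n with _ | n
        · simp [PowerSeries.coeff_smul, PowerSeries.coeff_one_X,
            MvPolynomial.smul_eq_C_mul]
        · simp [PowerSeries.coeff_smul, PowerSeries.coeff_X]
  have hmem := Submodule.sum_mem (twistedBoundaries N W)
    (fun j (_ : j ∈ Finset.univ) => key j)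
  have heq : PowerSeries.C W + ((N : ℂ) / 2 - cW / 2) •
        (PowerSeries.X : PowerSeries (MvPolynomial (Fin N) ℂ))
      = ∑ j, (PowerSeries.C (q j • (MvPolynomial.X j * MvPolynomial.pderiv j W))
        + (q j) • (PowerSeries.X : PowerSeries (MvPolynomial (Fin N) ℂ))) := by
    rw [Finset.sum_add_distrib, ← map_sum, ← hW, hs, Finset.sum_smul]
  rw [heq]; exact hmem
end

section
/- Let W = (1/5)(x_1^5+⋯+x_5^5) − ψ x_1x_2x_3x_4x_5 and n ≥ 5. Then in the cohomology of (Ω*_{C^5}[[u]], dW + u d_{DR}), one has [(x_1x_2x_3x_4x_5)^n dx_1⋯dx_5] = −u^5 (n−4)^5 [(x_1x_2x_3x_4x_5)^{n−5} dx_1⋯dx_5], assuming ψ = 0 (Fermat quintic W = (1/5)∑ x_j^5). -/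
open MvPolynomial PowerSeries

/-- Top-degree boundaries of the twisted de Rham complex `(Ω*_{ℂ^5}[[u]], dW + u d_DR)`,
in the trivialization of `Ω^5[[u]]` by `dx_1⋯dx_5`: the `ℂ`-span of
`∂_j W · f + u · ∂_j f` (`u = PowerSeries.X`, `∂_j` acting coefficientwise). -/
noncomputable def quinticBoundaries (W : MvPolynomial (Fin 5) ℂ) :
    Submodule ℂ (PowerSeries (MvPolynomial (Fin 5) ℂ)) :=
  Submodule.span ℂ
    {b | ∃ (j : Fin 5) (f : PowerSeries (MvPolynomial (Fin 5) ℂ)),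
      b = PowerSeries.C (MvPolynomial.pderiv j W) * f +
        PowerSeries.X * PowerSeries.mk fun n => MvPolynomial.pderiv j (PowerSeries.coeff n f)}

/-- The basic boundary elements: `X^k·C(∂_jW·m) + X^(k+1)·C(∂_j m)` is a boundary
(take `f = X^k·C m`). -/
lemma gen_mem (W : MvPolynomial (Fin 5) ℂ) (j : Fin 5) (k : ℕ) (m : MvPolynomial (Fin 5) ℂ) :
    PowerSeries.X ^ k * PowerSeries.C (MvPolynomial.pderiv j W * m)
      + PowerSeries.X ^ (k + 1) * PowerSeries.C (MvPolynomial.pderiv j m)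
      ∈ quinticBoundaries W := by
  apply Submodule.subset_span
  refine ⟨j, PowerSeries.X ^ k * PowerSeries.C m, ?_⟩
  congr 1
  · rw [map_mul]; ring
  · have h : (PowerSeries.mk fun n =>
        MvPolynomial.pderiv j (PowerSeries.coeff n (PowerSeries.X ^ k * PowerSeries.C m)))
        = PowerSeries.X ^ k * PowerSeries.C (MvPolynomial.pderiv j m) := by
      ext n
      simp only [PowerSeries.coeff_mk]
      rw [show (PowerSeries.X : PowerSeries (MvPolynomial (Fin 5) ℂ)) ^ k * PowerSeries.C m
        = PowerSeries.monomial k m by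
          rw [PowerSeries.X_pow_eq]; ext n'; simp [PowerSeries.coeff_monomial]]
      rw [show (PowerSeries.X : PowerSeries (MvPolynomial (Fin 5) ℂ)) ^ k
          * PowerSeries.C (MvPolynomial.pderiv j m)
        = PowerSeries.monomial k (MvPolynomial.pderiv j m) by
          rw [PowerSeries.X_pow_eq]; ext n'; simp [PowerSeries.coeff_monomial]]
      simp only [PowerSeries.coeff_monomial]
      split <;> simp
    rw [h]; ring

/-- The partial derivatives of the Fermat quintic. -/
lemma pderiv_fermat (j : Fin 5) :
    MvPolynomial.pderiv j (MvPolynomial.C (1 / 5 : ℂ) * ∑ i, MvPolynomial.X i ^ 5)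
      = MvPolynomial.X j ^ 4 := by
  rw [pderiv_C_mul, map_sum]
  simp [pderiv_pow, Finset.mul_sum]
  rw [Finset.sum_eq_single j (by intro b _ h; simp [Pi.single_eq_of_ne (by simpa using h)])
    (by simp)]
  rw [Pi.single_eq_same, mul_one,
    show (5:MvPolynomial (Fin 5) ℂ) = MvPolynomial.C (5:ℂ) from (map_ofNat MvPolynomial.C 5).symm,
    ← mul_assoc, ← C_mul]
  norm_num

/-- Scalar multiplication on `PowerSeries (MvPolynomial (Fin 5) ℂ)` as multiplication by
constants. -/
lemma csmul (z : ℂ) (f : PowerSeries (MvPolynomial (Fin 5) ℂ)) :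
    z • f = PowerSeries.C (MvPolynomial.C z) * f := by
  ext n; simp [MvPolynomial.smul_eq_C_mul]

set_option maxHeartbeats 2000000 in
/-- For the Fermat quintic `W = (1/5)(x_1^5 + ⋯ + x_5^5)` and `n ≥ 5`, in the
cohomology of `(Ω*_{ℂ^5}[[u]], dW + u d_DR)` one has
`[(x_1⋯x_5)^n dx_1⋯dx_5] = −u^5 (n−4)^5 [(x_1⋯x_5)^{n−5} dx_1⋯dx_5]`, i.e.
`(x_1⋯x_5)^n + (n−4)^5 u^5 (x_1⋯x_5)^{n−5}` is a boundary. -/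
theorem quintic_reduction (n : ℕ) (hn : 5 ≤ n) :
    PowerSeries.C ((∏ j, MvPolynomial.X j : MvPolynomial (Fin 5) ℂ) ^ n) +
      ((n : ℂ) - 4) ^ 5 • (PowerSeries.X ^ 5 *
        PowerSeries.C ((∏ j, MvPolynomial.X j : MvPolynomial (Fin 5) ℂ) ^ (n - 5)))
      ∈ quinticBoundaries
          (MvPolynomial.C (1 / 5 : ℂ) * ∑ j, MvPolynomial.X j ^ 5) := by
  obtain ⟨m, rfl⟩ : ∃ m, n = m + 5 := ⟨n - 5, by omega⟩
  set W : MvPolynomial (Fin 5) ℂ := MvPolynomial.C (1 / 5 : ℂ) * ∑ j, MvPolynomial.X j ^ 5 with hW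
  set x : Fin 5 → MvPolynomial (Fin 5) ℂ := MvPolynomial.X with hx
  have h0 := gen_mem W 0 0 (x 0 ^ (m+1) * x 1 ^ (m+5) * x 2 ^ (m+5) * x 3 ^ (m+5) * x 4 ^ (m+5))
  have h1 := gen_mem W 1 1 (x 0 ^ m * x 1 ^ (m+1) * x 2 ^ (m+5) * x 3 ^ (m+5) * x 4 ^ (m+5))
  have h2 := gen_mem W 2 2 (x 0 ^ m * x 1 ^ m * x 2 ^ (m+1) * x 3 ^ (m+5) * x 4 ^ (m+5))
  have h3 := gen_mem W 3 3 (x 0 ^ m * x 1 ^ m * x 2 ^ m * x 3 ^ (m+1) * x 4 ^ (m+5))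
  have h4 := gen_mem W 4 4 (x 0 ^ m * x 1 ^ m * x 2 ^ m * x 3 ^ m * x 4 ^ (m+1))
  set d : ℂ := -((m : ℂ) + 1) with hd
  have key :
      PowerSeries.C ((∏ j, MvPolynomial.X j : MvPolynomial (Fin 5) ℂ) ^ (m+5)) +
        (((m+5 : ℕ) : ℂ) - 4) ^ 5 • (PowerSeries.X ^ 5 *
          PowerSeries.C ((∏ j, MvPolynomial.X j : MvPolynomial (Fin 5) ℂ) ^ (m+5-5)))
      = (PowerSeries.X ^ 0 * PowerSeries.C (MvPolynomial.pderiv 0 W *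
            (x 0 ^ (m+1) * x 1 ^ (m+5) * x 2 ^ (m+5) * x 3 ^ (m+5) * x 4 ^ (m+5)))
          + PowerSeries.X ^ (0+1) * PowerSeries.C (MvPolynomial.pderiv 0
            (x 0 ^ (m+1) * x 1 ^ (m+5) * x 2 ^ (m+5) * x 3 ^ (m+5) * x 4 ^ (m+5))))
        + d • (PowerSeries.X ^ 1 * PowerSeries.C (MvPolynomial.pderiv 1 W *
            (x 0 ^ m * x 1 ^ (m+1) * x 2 ^ (m+5) * x 3 ^ (m+5) * x 4 ^ (m+5)))
          + PowerSeries.X ^ (1+1) * PowerSeries.C (MvPolynomial.pderiv 1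
            (x 0 ^ m * x 1 ^ (m+1) * x 2 ^ (m+5) * x 3 ^ (m+5) * x 4 ^ (m+5))))
        + d ^ 2 • (PowerSeries.X ^ 2 * PowerSeries.C (MvPolynomial.pderiv 2 W *
            (x 0 ^ m * x 1 ^ m * x 2 ^ (m+1) * x 3 ^ (m+5) * x 4 ^ (m+5)))
          + PowerSeries.X ^ (2+1) * PowerSeries.C (MvPolynomial.pderiv 2
            (x 0 ^ m * x 1 ^ m * x 2 ^ (m+1) * x 3 ^ (m+5) * x 4 ^ (m+5))))
        + d ^ 3 • (PowerSeries.X ^ 3 * PowerSeries.C (MvPolynomial.pderiv 3 W *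
            (x 0 ^ m * x 1 ^ m * x 2 ^ m * x 3 ^ (m+1) * x 4 ^ (m+5)))
          + PowerSeries.X ^ (3+1) * PowerSeries.C (MvPolynomial.pderiv 3
            (x 0 ^ m * x 1 ^ m * x 2 ^ m * x 3 ^ (m+1) * x 4 ^ (m+5))))
        + d ^ 4 • (PowerSeries.X ^ 4 * PowerSeries.C (MvPolynomial.pderiv 4 W *
            (x 0 ^ m * x 1 ^ m * x 2 ^ m * x 3 ^ m * x 4 ^ (m+1)))
          + PowerSeries.X ^ (4+1) * PowerSeries.C (MvPolynomial.pderiv 4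
            (x 0 ^ m * x 1 ^ m * x 2 ^ m * x 3 ^ m * x 4 ^ (m+1)))) := by
    have hp0 : MvPolynomial.pderiv (0 : Fin 5)
        (x 0 ^ (m+1) * x 1 ^ (m+5) * x 2 ^ (m+5) * x 3 ^ (m+5) * x 4 ^ (m+5))
        = MvPolynomial.C ((m:ℂ)+1) *
          (x 0 ^ m * x 1 ^ (m+5) * x 2 ^ (m+5) * x 3 ^ (m+5) * x 4 ^ (m+5)) := by
      simp [hx, pderiv_mul, pderiv_pow, Pi.single_eq_of_ne]
      ring
    have hp1 : MvPolynomial.pderiv (1 : Fin 5)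
        (x 0 ^ m * x 1 ^ (m+1) * x 2 ^ (m+5) * x 3 ^ (m+5) * x 4 ^ (m+5))
        = MvPolynomial.C ((m:ℂ)+1) *
          (x 0 ^ m * x 1 ^ m * x 2 ^ (m+5) * x 3 ^ (m+5) * x 4 ^ (m+5)) := by
      simp [hx, pderiv_mul, pderiv_pow, Pi.single_eq_of_ne]
      ring
    have hp2 : MvPolynomial.pderiv (2 : Fin 5)
        (x 0 ^ m * x 1 ^ m * x 2 ^ (m+1) * x 3 ^ (m+5) * x 4 ^ (m+5))
        = MvPolynomial.C ((m:ℂ)+1) *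
          (x 0 ^ m * x 1 ^ m * x 2 ^ m * x 3 ^ (m+5) * x 4 ^ (m+5)) := by
      simp [hx, pderiv_mul, pderiv_pow, Pi.single_eq_of_ne]
      ring
    have hp3 : MvPolynomial.pderiv (3 : Fin 5)
        (x 0 ^ m * x 1 ^ m * x 2 ^ m * x 3 ^ (m+1) * x 4 ^ (m+5))
        = MvPolynomial.C ((m:ℂ)+1) *
          (x 0 ^ m * x 1 ^ m * x 2 ^ m * x 3 ^ m * x 4 ^ (m+5)) := by
      simp [hx, pderiv_mul, pderiv_pow, Pi.single_eq_of_ne]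
      ring
    have hp4 : MvPolynomial.pderiv (4 : Fin 5)
        (x 0 ^ m * x 1 ^ m * x 2 ^ m * x 3 ^ m * x 4 ^ (m+1))
        = MvPolynomial.C ((m:ℂ)+1) *
          (x 0 ^ m * x 1 ^ m * x 2 ^ m * x 3 ^ m * x 4 ^ m) := by
      simp [hx, pderiv_mul, pderiv_pow, Pi.single_eq_of_ne]
      ring
    rw [hp0, hp1, hp2, hp3, hp4, hW]
    simp only [pderiv_fermat, Fin.prod_univ_five, hx, hd]
    rw [show m + 5 - 5 = m from by omega,
      show ((m+5 : ℕ) : ℂ) - 4 = (m : ℂ) + 1 from by push_cast; ring]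
    simp only [csmul, map_mul, map_pow, map_neg, map_add, map_one, MvPolynomial.C_add,
      MvPolynomial.C_1]
    ring
  rw [show m + 5 - 5 = m from by omega] at key ⊢
  rw [key]
  exact Submodule.add_mem _ (Submodule.add_mem _ (Submodule.add_mem _ (Submodule.add_mem _ h0
    (Submodule.smul_mem _ _ h1)) (Submodule.smul_mem _ _ h2)) (Submodule.smul_mem _ _ h3))
    (Submodule.smul_mem _ _ h4)
end
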